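/- arXiv:1808.01569 — 4 statements merged into one kernel-verified Lean document; each statement's English description precedes it below -/
import Mathlib

section
/- In an infinite Fort transformation group (F,G) with ideal I on G, for distinct x,y ∈ F∖{b}: (x,y) ∈ Asym_I(F,G) if and only if for every h ∈ G, st(x)h ∪ st(y)h ∈ I, where st(x) = {g ∈ G : xg = x}. -/
open Pointwise

/-- An ideal on (the carrier of) a group `G`. -/
def IsIdealOn {G : Type*} (I : Set (Set G)) : Prop :=
  I.Nonempty ∧ (∀ A ∈ I, ∀ B : Set G, B ⊆ A → B ∈ I) ∧ ∀ A ∈ I, ∀ B ∈ I, A ∪ B ∈ I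

/-- The basic entourage `α_D = ((F∖D) × (F∖D)) ∪ Δ_D` of the Fort uniformity. -/
def fortEntourage (F : Type*) (D : Set F) : Set (F × F) :=
  (Dᶜ ×ˢ Dᶜ) ∪ {p : F × F | p.1 ∈ D ∧ p.1 = p.2}

/-- Asymptoticity modulo an ideal `I` in a Fort transformation group `(F,G)`, expressed via
the generating entourages `α_D` (finite `D ⊆ F∖{b}`) of the unique uniformity of the Fort
space `F` with particular point `b`. -/
def FortAsymMod (G F : Type*) [SMul G F] (b : F) (I : Set (Set G)) (x y : F) : Prop :=
  ∀ D : Set F, D.Finite → b ∉ D → {g : G | (g • x, g • y) ∉ fortEntourage F D} ∈ I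

/-- In an infinite Fort transformation group `(F,G)` with ideal `I` on `G`, for distinct
`x, y ∈ F∖{b}`: `(x,y)` is asymptotic modulo `I` iff every pair of translated cosets
`st(x)h ∪ st(y)h` of the stabilizers lies in `I`. -/
theorem stmt12 {F G : Type*} [Group G] [MulAction G F] (b : F) (hF : Infinite F)
    (hb : ∀ g : G, g • b = b)
    (I : Set (Set G)) (hI : IsIdealOn I)
    (x y : F) (hx : x ≠ b) (hy : y ≠ b) (hxy : x ≠ y) :
    FortAsymMod G F b I x y ↔
      ∀ h : G, (h • (MulAction.stabilizer G x : Set G)) ∪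
        (h • (MulAction.stabilizer G y : Set G)) ∈ I := by
  obtain ⟨A0, hA0⟩ := hI.1
  have hempty : (∅ : Set G) ∈ I := hI.2.1 A0 hA0 ∅ (Set.empty_subset _)
  have hne : ∀ g : G, g • x ≠ g • y := fun g h => hxy (smul_left_cancel g h)
  have key : ∀ (D : Set F) (g : G),
      (g • x, g • y) ∉ fortEntourage F D ↔ g • x ∈ D ∨ g • y ∈ D := by
    intro D g
    constructor
    · intro h
      by_contra hc
      push_neg at hc
      exact h (Or.inl ⟨hc.1, hc.2⟩)
    · rintro h hmem
      rcases hmem with ⟨h1, h2⟩ | ⟨h1, h2⟩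
      · rcases h with h | h
        exacts [h1 h, h2 h]
      · exact hne g h2
  have cos : ∀ (z : F) (h g : G),
      g ∈ h • ((MulAction.stabilizer G z : Subgroup G) : Set G) ↔ g • z = h • z := by
    intro z h g
    rw [Set.mem_smul_set_iff_inv_smul_mem]
    simp only [SetLike.mem_coe, MulAction.mem_stabilizer_iff, smul_eq_mul, mul_smul,
      inv_smul_eq_iff]
  constructor
  · intro H h
    have hD : ({h • x, h • y} : Set F).Finite := by
      exact (Set.finite_singleton _).insert _
    have hbD : b ∉ ({h • x, h • y} : Set F) := by
      intro hmem
      rcases hmem with e | e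
      · exact hx (smul_left_cancel h (e.symm.trans (hb h).symm))
      · exact hy (smul_left_cancel h ((Set.mem_singleton_iff.mp e).symm.trans (hb h).symm))
    have hbad := H _ hD hbD
    refine hI.2.1 _ hbad _ ?_
    rintro g (hg | hg) <;> rw [Set.mem_setOf_eq, key]
    · rw [cos x h g] at hg
      exact Or.inl (Or.inl hg)
    · rw [cos y h g] at hg
      exact Or.inr (by simp [hg])
  · intro H D hDfin hbD
    have single : ∀ z : F, {g : G | g • x = z} ∪ {g : G | g • y = z} ∈ I := by
      intro z
      have compx : {g : G | g • x = z} ∈ I := by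
        by_cases hc : ∃ h : G, h • x = z
        · obtain ⟨h, rfl⟩ := hc
          refine hI.2.1 _ (H h) _ ?_
          intro g hg
          exact Or.inl ((cos x h g).mpr hg)
        · push_neg at hc
          have : {g : G | g • x = z} = ∅ := by
            ext g; simp only [Set.mem_setOf_eq, Set.mem_empty_iff_false, iff_false]
            exact hc g
          rw [this]; exact hempty
      have compy : {g : G | g • y = z} ∈ I := by
        by_cases hc : ∃ h : G, h • y = z
        · obtain ⟨h, rfl⟩ := hc
          refine hI.2.1 _ (H h) _ ?_
          intro g hg
          exact Or.inr ((cos y h g).mpr hg)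
        · push_neg at hc
          have : {g : G | g • y = z} = ∅ := by
            ext g; simp only [Set.mem_setOf_eq, Set.mem_empty_iff_false, iff_false]
            exact hc g
          rw [this]; exact hempty
      exact hI.2.2 _ compx _ compy
    have hset : {g : G | (g • x, g • y) ∉ fortEntourage F D} =
        {g : G | g • x ∈ D ∨ g • y ∈ D} := by
      ext g; exact key D g
    rw [hset]
    clear hbD hset
    refine Set.Finite.induction_on D hDfin (by simpa using hempty) ?_
    intro z s hzs hsfin ih
    · have : {g : G | g • x ∈ insert z s ∨ g • y ∈ insert z s} =
          ({g : G | g • x = z} ∪ {g : G | g • y = z}) ∪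
            {g : G | g • x ∈ s ∨ g • y ∈ s} := by
        ext g
        simp only [Set.mem_setOf_eq, Set.mem_insert_iff, Set.mem_union]
        tauto
      rw [this]
      exact hI.2.2 _ (single z) _ ih
end

section
/- In an infinite Fort transformation group (F,G) with ideal I on G, for x ∈ F∖{b}: (x,b) ∈ Asym_I(F,G) if and only if st(x)h ∈ I for every h ∈ G. -/
open Pointwise

/-- In an infinite Fort transformation group `(F,G)` with ideal `I` on `G`, for `x ∈ F∖{b}`:
`(x,b)` is asymptotic modulo `I` iff every translated coset `st(x)h` of the stabilizer of `x`
lies in `I`. -/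
theorem stmt13 {F G : Type*} [Group G] [MulAction G F] (b : F) (hF : Infinite F)
    (hb : ∀ g : G, g • b = b)
    (I : Set (Set G)) (hI : IsIdealOn I)
    (x : F) (hx : x ≠ b) :
    FortAsymMod G F b I x b ↔
      ∀ h : G, (h • (MulAction.stabilizer G x : Set G)) ∈ I := by
  obtain ⟨⟨A0, hA0⟩, hdown, hunion⟩ := hI
  have hempty : (∅ : Set G) ∈ I := hdown A0 hA0 ∅ (Set.empty_subset _)
  have key : ∀ D : Set F, b ∉ D →
      {g : G | (g • x, g • b) ∉ fortEntourage F D} = {g : G | g • x ∈ D} := by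
    intro D hbD
    ext g
    simp only [Set.mem_setOf_eq, fortEntourage, Set.mem_union, Set.mem_prod,
      Set.mem_compl_iff, hb g]
    constructor
    · intro h
      by_contra hg
      exact h (Or.inl ⟨hg, hbD⟩)
    · intro hg h
      rcases h with ⟨h1, _⟩ | ⟨_, h2⟩
      · exact h1 hg
      · exact hbD (h2 ▸ hg)
  have coset : ∀ h : G, (h • (MulAction.stabilizer G x : Set G)) = {g : G | g • x = h • x} := by
    intro h
    ext g
    simp only [Set.mem_smul_set, SetLike.mem_coe, Set.mem_setOf_eq]
    constructor
    · rintro ⟨s, hs, rfl⟩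
      rw [smul_eq_mul, mul_smul, hs]
    · intro hg
      exact ⟨h⁻¹ * g, by rw [MulAction.mem_stabilizer_iff, mul_smul, hg, inv_smul_smul],
        by simp [smul_eq_mul, mul_assoc]⟩
  constructor
  · intro H h
    have hhx : h • x ≠ b := fun he => hx (by
      have := congrArg (fun y => h⁻¹ • y) he
      simpa [hb] using this)
    have h2 : b ∉ ({h • x} : Set F) := by simpa using Ne.symm hhx
    have := H {h • x} (Set.finite_singleton _) h2
    rw [key _ h2] at this
    rw [coset h]
    simpa using this
  · intro H D hDfin hbD
    rw [key _ hbD]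
    clear hbD
    refine Set.Finite.induction_on (motive := fun s _ => {g : G | g • x ∈ s} ∈ I) D hDfin (by simpa using hempty) ?_
    intro a s _ hsfin ih
    have hsplit : {g : G | g • x ∈ insert a s} = {g : G | g • x = a} ∪ {g : G | g • x ∈ s} := by
      ext g; simp [Set.mem_insert_iff]
    rw [hsplit]
    have h1 : {g : G | g • x = a} ∈ I := by
      by_cases hex : ∃ h : G, h • x = a
      · obtain ⟨h, rfl⟩ := hex
        rw [← coset h]; exact H h
      · have : {g : G | g • x = a} = ∅ := by
          ext g; simp only [Set.mem_setOf_eq, Set.mem_empty_iff_false, iff_false]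
          exact fun hg => hex ⟨g, hg⟩
        rw [this]; exact hempty
    exact hunion _ h1 _ ih
end

section
/- In an infinite Fort transformation group (F,G) with a G-invariant ideal I on G (i.e., A ∈ I and s ∈ G imply As ∈ I), the asymptotic pairs modulo I are exactly: the diagonal, pairs (x,y) with st(x) ∪ st(y) ∈ I, pairs (x,b) with st(x) ∈ I, and pairs (b,y) with st(y) ∈ I. -/
open Pointwise

/-- In an infinite Fort transformation group `(F,G)` with a `G`-invariant ideal `I` on `G`
(closed under translation), the pairs asymptotic modulo `I` are exactly: the diagonal, the
pairs `(x,y)` with `x,y ≠ b` and `st(x) ∪ st(y) ∈ I`, the pairs `(x,b)` with `st(x) ∈ I`,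
and the pairs `(b,y)` with `st(y) ∈ I`. -/
theorem stmt14 {F G : Type*} [Group G] [MulAction G F] (b : F) (hF : Infinite F)
    (hb : ∀ g : G, g • b = b)
    (I : Set (Set G)) (hI : IsIdealOn I) (hinv : ∀ A ∈ I, ∀ g : G, g • A ∈ I) :
    ∀ x y : F, FortAsymMod G F b I x y ↔
      (x = y ∨
       (x ≠ b ∧ y ≠ b ∧
         ((MulAction.stabilizer G x : Set G) ∪ (MulAction.stabilizer G y : Set G)) ∈ I) ∨
       (y = b ∧ (MulAction.stabilizer G x : Set G) ∈ I) ∨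
       (x = b ∧ (MulAction.stabilizer G y : Set G) ∈ I)) := by
  obtain ⟨⟨A0, hA0⟩, hdown, hun⟩ := hI
  have hempty : (∅ : Set G) ∈ I := hdown A0 hA0 ∅ (Set.empty_subset _)
  have memE : ∀ (u v : F) (D : Set F),
      (u, v) ∈ fortEntourage F D ↔ (u ∉ D ∧ v ∉ D) ∨ (u ∈ D ∧ u = v) := by
    intro u v D
    simp [fortEntourage, Set.mem_prod]
  have key : ∀ (z : F), (MulAction.stabilizer G z : Set G) ∈ I →
      ∀ D : Set F, D.Finite → {g : G | g • z ∈ D} ∈ I := by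
    intro z hz D hD
    refine Set.Finite.induction_on (motive := fun D _ => {g : G | g • z ∈ D} ∈ I) D hD (by simpa using hempty) ?_
    intro d D' hmem hfin ih
    · have h1 : {g : G | g • z = d} ∈ I := by
        by_cases h : ∃ g₀ : G, g₀ • z = d
        · obtain ⟨g₀, hg₀⟩ := h
          have he : {g : G | g • z = d} = g₀ • (MulAction.stabilizer G z : Set G) := by
            ext g
            simp only [Set.mem_setOf_eq, Set.mem_smul_set_iff_inv_smul_mem,
              SetLike.mem_coe, MulAction.mem_stabilizer_iff, smul_eq_mul, mul_smul,
              inv_smul_eq_iff, hg₀]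
          rw [he]; exact hinv _ hz g₀
        · have he : {g : G | g • z = d} = ∅ := by
            ext g
            simp only [Set.mem_setOf_eq, Set.mem_empty_iff_false, iff_false]
            exact fun hg => h ⟨g, hg⟩
          rw [he]; exact hempty
      have he : {g : G | g • z ∈ insert d D'} =
          {g : G | g • z = d} ∪ {g : G | g • z ∈ D'} := by
        ext g; simp [Set.mem_insert_iff]
      rw [he]; exact hun _ h1 _ ih
  have sub2 : ∀ (x y : F) (D : Set F),
      {g : G | (g • x, g • y) ∉ fortEntourage F D} ⊆
        {g : G | g • x ∈ D} ∪ {g : G | g • y ∈ D} := by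
    intro x y D g hg
    by_contra hc
    simp only [Set.mem_union, Set.mem_setOf_eq, not_or] at hc
    exact hg ((memE _ _ _).mpr (Or.inl hc))
  intro x y
  constructor
  · intro h
    by_cases hxy : x = y
    · exact Or.inl hxy
    have hne : ∀ g : G, g • x ≠ g • y := fun g hg => hxy ((smul_left_cancel_iff g).mp hg)
    by_cases hx : x = b
    · have hy : y ≠ b := fun h' => hxy (hx.trans h'.symm)
      refine Or.inr (Or.inr (Or.inr ⟨hx, ?_⟩))
      refine hdown _ (h {y} (Set.finite_singleton y)
        (by simpa using fun h' => hy h'.symm)) _ ?_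
      intro g hg
      simp only [SetLike.mem_coe, MulAction.mem_stabilizer_iff] at hg
      simp only [Set.mem_setOf_eq, memE]
      rintro (⟨h1, h2⟩ | ⟨h1, h2⟩)
      · exact h2 (by simp [hg])
      · exact hne g h2
    by_cases hy : y = b
    · refine Or.inr (Or.inr (Or.inl ⟨hy, ?_⟩))
      refine hdown _ (h {x} (Set.finite_singleton x)
        (by simpa using fun h' => hx h'.symm)) _ ?_
      intro g hg
      simp only [SetLike.mem_coe, MulAction.mem_stabilizer_iff] at hg
      simp only [Set.mem_setOf_eq, memE]
      rintro (⟨h1, h2⟩ | ⟨h1, h2⟩)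
      · exact h1 (by simp [hg])
      · exact hne g h2
    · refine Or.inr (Or.inl ⟨hx, hy, ?_⟩)
      have hbD : b ∉ ({x, y} : Set F) := by
        intro hb'
        simp only [Set.mem_insert_iff, Set.mem_singleton_iff] at hb'
        rcases hb' with h' | h'
        · exact hx h'.symm
        · exact hy h'.symm
      refine hdown _ (h {x, y} (Set.toFinite _) hbD) _ ?_
      rintro g (hg | hg) <;>
        simp only [SetLike.mem_coe, MulAction.mem_stabilizer_iff] at hg <;>
        simp only [Set.mem_setOf_eq, memE] <;>
        rintro (⟨h1, h2⟩ | ⟨h1, h2⟩)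
      · exact h1 (by simp [hg])
      · exact hne g h2
      · exact h2 (by simp [hg])
      · exact hne g h2
  · rintro (hxy | ⟨hx, hy, hu⟩ | ⟨hy, hst⟩ | ⟨hx, hst⟩)
    · subst hxy
      intro D hD hbD
      have he : {g : G | (g • x, g • x) ∉ fortEntourage F D} = ∅ := by
        ext g
        simp only [Set.mem_setOf_eq, Set.mem_empty_iff_false, iff_false, not_not]
        rw [memE]
        by_cases hgx : g • x ∈ D
        · exact Or.inr ⟨hgx, rfl⟩
        · exact Or.inl ⟨hgx, hgx⟩
      rw [he]; exact hempty
    · intro D hD hbD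
      have hsx : (MulAction.stabilizer G x : Set G) ∈ I :=
        hdown _ hu _ Set.subset_union_left
      have hsy : (MulAction.stabilizer G y : Set G) ∈ I :=
        hdown _ hu _ Set.subset_union_right
      exact hdown _ (hun _ (key x hsx D hD) _ (key y hsy D hD)) _ (sub2 x y D)
    · intro D hD hbD
      have h2 : {g : G | g • y ∈ D} ∈ I := by
        have : {g : G | g • y ∈ D} = ∅ := by
          ext g; simp [hy, hb g, hbD]
        rw [this]; exact hempty
      exact hdown _ (hun _ (key x hst D hD) _ h2) _ (sub2 x y D)
    · intro D hD hbD
      have h2 : {g : G | g • x ∈ D} ∈ I := by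
        have : {g : G | g • x ∈ D} = ∅ := by
          ext g; simp [hx, hb g, hbD]
        rw [this]; exact hempty
      exact hdown _ (hun _ h2 _ (key y hst D hD)) _ (sub2 x y D)
end

section
/- In an infinite Fort transformation group (F,G), (x,y) ∈ Asym(F,G) (i.e., asymptotic modulo the ideal of finite subsets of G) for distinct x,y ∈ F∖{b} if and only if st(x) ∪ st(y) is finite; and (x,b) ∈ Asym(F,G) if and only if st(x) is finite. -/
open Pointwise

lemma fortEntourage_notmem {F : Type*} {D : Set F} {a c : F} (h : a ≠ c) :
    (a, c) ∉ fortEntourage F D ↔ a ∈ D ∨ c ∈ D := by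
  simp only [fortEntourage, Set.mem_union, Set.mem_prod, Set.mem_compl_iff, Set.mem_setOf_eq]
  tauto

lemma fiber_finite {G F : Type*} [Group G] [MulAction G F] {x : F}
    (h : (MulAction.stabilizer G x : Set G).Finite) (d : F) :
    {g : G | g • x = d}.Finite := by
  by_cases he : ∃ g₀ : G, g₀ • x = d
  · obtain ⟨g₀, hg₀⟩ := he
    refine (h.image (g₀ * ·)).subset ?_
    intro g hg
    refine ⟨g₀⁻¹ * g, ?_, by group⟩
    simp only [SetLike.mem_coe, MulAction.mem_stabilizer_iff, mul_smul]
    rw [Set.mem_setOf_eq] at hg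
    rw [hg, ← hg₀, inv_smul_smul]
  · convert Set.finite_empty
    simpa [Set.eq_empty_iff_forall_notMem] using fun g hg => he ⟨g, hg⟩

lemma hits_finite {G F : Type*} [Group G] [MulAction G F] {x : F}
    (h : (MulAction.stabilizer G x : Set G).Finite) {D : Set F} (hD : D.Finite) :
    {g : G | g • x ∈ D}.Finite := by
  have : {g : G | g • x ∈ D} = ⋃ d ∈ D, {g : G | g • x = d} := by
    ext g; simp
  rw [this]
  exact hD.biUnion fun d _ => fiber_finite h d

/-- In an infinite Fort transformation group `(F,G)`, for asymptoticity modulo the ideal of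
finite subsets of `G`: distinct `x,y ∈ F∖{b}` are asymptotic iff `st(x) ∪ st(y)` is finite,
and for `x ∈ F∖{b}`, `(x,b)` is asymptotic iff `st(x)` is finite. -/
theorem stmt15 {F G : Type*} [Group G] [MulAction G F] (b : F) (hF : Infinite F)
    (hb : ∀ g : G, g • b = b) :
    (∀ x y : F, x ≠ b → y ≠ b → x ≠ y →
      (FortAsymMod G F b {A : Set G | A.Finite} x y ↔
        ((MulAction.stabilizer G x : Set G) ∪ (MulAction.stabilizer G y : Set G)).Finite)) ∧
    (∀ x : F, x ≠ b →
      (FortAsymMod G F b {A : Set G | A.Finite} x b ↔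
        (MulAction.stabilizer G x : Set G).Finite)) := by
  have hsmul_ne : ∀ (g : G) (x y : F), x ≠ y → g • x ≠ g • y := by
    intro g x y h he
    exact h (smul_left_cancel g he)
  constructor
  · intro x y hx hy hxy
    have key : ∀ D : Set F,
        {g : G | (g • x, g • y) ∉ fortEntourage F D} = {g : G | g • x ∈ D ∨ g • y ∈ D} := by
      intro D
      ext g
      exact fortEntourage_notmem (hsmul_ne g x y hxy)
    constructor
    · intro h
      have h1 := h {x} (Set.finite_singleton x) (by simpa using Ne.symm hx)
      have h2 := h {y} (Set.finite_singleton y) (by simpa using Ne.symm hy)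
      rw [Set.mem_setOf_eq, key] at h1 h2
      refine Set.Finite.union (h1.subset ?_) (h2.subset ?_)
      · intro g hg
        simp only [SetLike.mem_coe, MulAction.mem_stabilizer_iff] at hg
        exact Or.inl (by simp [hg])
      · intro g hg
        simp only [SetLike.mem_coe, MulAction.mem_stabilizer_iff] at hg
        exact Or.inr (by simp [hg])
    · intro h D hD _
      rw [Set.mem_setOf_eq, key]
      have hx' : (MulAction.stabilizer G x : Set G).Finite := h.subset Set.subset_union_left
      have hy' : (MulAction.stabilizer G y : Set G).Finite := h.subset Set.subset_union_right
      have : {g : G | g • x ∈ D ∨ g • y ∈ D} =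
          {g : G | g • x ∈ D} ∪ {g : G | g • y ∈ D} := rfl
      rw [this]
      exact (hits_finite hx' hD).union (hits_finite hy' hD)
  · intro x hx
    have key : ∀ D : Set F, b ∉ D →
        {g : G | (g • x, g • b) ∉ fortEntourage F D} = {g : G | g • x ∈ D} := by
      intro D hbD
      ext g
      have hne : g • x ≠ g • b := hsmul_ne g x b hx
      rw [Set.mem_setOf_eq, fortEntourage_notmem hne, hb g, Set.mem_setOf_eq]
      simp [hbD]
    constructor
    · intro h
      have h1 := h {x} (Set.finite_singleton x) (by simpa using Ne.symm hx)
      rw [Set.mem_setOf_eq, key _ (by simpa using Ne.symm hx)] at h1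
      refine h1.subset ?_
      intro g hg
      simp only [SetLike.mem_coe, MulAction.mem_stabilizer_iff] at hg
      simp [hg]
    · intro h D hD hbD
      rw [Set.mem_setOf_eq, key _ hbD]
      exact hits_finite h hD
end
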